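/- For the Khachiyan-type SDP: fix τ, n ∈ ℕ, let B = 2^τ, and consider variables x₀,…,x_n ∈ ℝ with x₀ = 1/2 and constraints [[x_i, x_{i−1}],[x_{i−1}, B]] ⪰ 0 for i = 1,…,n. Then for any feasible point, x_n ≥ (1/2)^{2^n} / B^{2^n − 1} = 2^{−(τ+1)2^n + τ}, and this bound is attained by the point defined recursively by x_i = x_{i−1}²/B. -/

import Mathlib

open Matrix

lemma psd2 {a c b : ℝ} (ha : 0 ≤ a) (hb : 0 < b) (h : c^2 ≤ a * b) :
    (!![a, c; c, b] : Matrix (Fin 2) (Fin 2) ℝ).PosSemidef := by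
  rw [Matrix.posSemidef_iff_dotProduct_mulVec]
  constructor
  · ext i j
    fin_cases i <;> fin_cases j <;> simp [Matrix.conjTranspose_apply]
  · intro y
    have key : b * (star y ⬝ᵥ (!![a, c; c, b] *ᵥ y)) =
        (b * y 1 + c * y 0)^2 + (a * b - c^2) * (y 0)^2 := by
      simp [dotProduct, Matrix.mulVec, Fin.sum_univ_two]
      ring
    nlinarith [sq_nonneg (b * y 1 + c * y 0), sq_nonneg (y 0)]

lemma psd2_inv {a c b : ℝ} (hb : 0 < b)
    (h : (!![a, c; c, b] : Matrix (Fin 2) (Fin 2) ℝ).PosSemidef) :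
    0 ≤ a ∧ c^2 ≤ a * b := by
  obtain ⟨-, h2⟩ := Matrix.posSemidef_iff_dotProduct_mulVec.mp h
  have h0 := h2 ![1, 0]
  have h1 := h2 ![b, -c]
  simp [dotProduct, Matrix.mulVec, Fin.sum_univ_two] at h0 h1
  constructor
  · linarith
  · nlinarith

lemma vrec (τ : ℕ) (i : ℕ) :
    (2:ℝ) ^ (-((τ:ℤ)+1) * 2^(i+1) + τ) =
      ((2:ℝ) ^ (-((τ:ℤ)+1) * 2^i + τ))^2 / (2:ℝ)^τ := by
  rw [← zpow_natCast (2:ℝ) τ, sq, ← zpow_add₀ (by norm_num : (2:ℝ) ≠ 0),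
    ← zpow_sub₀ (by norm_num : (2:ℝ) ≠ 0)]
  congr 1
  ring

theorem khachiyan_sdp (τ n : ℕ) :
    (∀ x : ℕ → ℝ, x 0 = 1/2 →
      (∀ i, 1 ≤ i → i ≤ n →
        (!![x i, x (i-1); x (i-1), ((2:ℝ)^τ)] : Matrix (Fin 2) (Fin 2) ℝ).PosSemidef) →
      (2:ℝ) ^ (-((τ:ℤ)+1) * 2^n + τ) ≤ x n) ∧
    (∃ v : ℕ → ℝ, v 0 = 1/2 ∧
      (∀ i, v (i+1) = (v i)^2 / (2:ℝ)^τ) ∧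
      (∀ i, 1 ≤ i → i ≤ n →
        (!![v i, v (i-1); v (i-1), ((2:ℝ)^τ)] : Matrix (Fin 2) (Fin 2) ℝ).PosSemidef) ∧
      v n = (2:ℝ) ^ (-((τ:ℤ)+1) * 2^n + τ)) := by
  have hBpos : (0:ℝ) < 2^τ := by positivity
  set v : ℕ → ℝ := fun i => (2:ℝ) ^ (-((τ:ℤ)+1) * 2^i + τ) with hv
  have hv0 : v 0 = 1/2 := by
    show (2:ℝ) ^ (-((τ:ℤ)+1) * 2^(0:ℕ) + τ) = 1/2
    rw [pow_zero, mul_one, show -((τ:ℤ)+1) + τ = -1 by ring]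
    norm_num
  have hvpos : ∀ i, 0 < v i := fun i => by positivity
  have hrec : ∀ i, v (i+1) = (v i)^2 / 2^τ := fun i => vrec τ i
  constructor
  · intro x hx0 hcon
    -- prove by induction: ∀ i ≤ n, v i ≤ x i
    have key : ∀ i, i ≤ n → v i ≤ x i := by
      intro i
      induction i with
      | zero => intro _; rw [hx0, hv0]
      | succ k ih =>
        intro hk
        have hkn : k ≤ n := Nat.le_of_succ_le hk
        have hvk := ih hkn
        have hcon' := hcon (k+1) (Nat.le_add_left 1 k) hk
        simp only [Nat.add_sub_cancel] at hcon'
        obtain ⟨hx, hsq⟩ := psd2_inv hBpos hcon'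
        have hvk0 : 0 < v k := hvpos k
        have h1 : (v k)^2 ≤ (x k)^2 := by nlinarith
        have : (v k)^2 / 2^τ ≤ x (k+1) := by
          rw [div_le_iff₀ hBpos]
          nlinarith
        calc v (k+1) = (v k)^2 / 2^τ := hrec k
          _ ≤ x (k+1) := this
    exact key n le_rfl
  · refine ⟨v, hv0, hrec, ?_, rfl⟩
    intro i h1 _
    obtain ⟨k, rfl⟩ := Nat.exists_eq_add_of_le h1
    simp only [Nat.add_sub_cancel, Nat.add_comm 1 k] at *
    apply psd2 (hvpos _).le hBpos
    rw [hrec k, div_mul_cancel₀]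
    exact hBpos.ne'
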